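/- Let f = Σ_α c_α X^α ∈ ℝ[X_1,...,X_d] and ρ > 0. Define t(f,ρ) := Σ_α |c_α| (ρ+1)^{|α|}, where |α| = α_1 + ⋯ + α_d. Then both polynomials t(f,ρ) + f and t(f,ρ) − f belong to the quadratic module generated by ρ − ‖X‖² in ℝ[X]. -/

import Mathlib

open Finset MvPolynomial

/-- `p` is a sum of squares. -/
def IsSOS {d : ℕ} (p : MvPolynomial (Fin d) ℝ) : Prop :=
  ∃ (k : ℕ) (q : Fin k → MvPolynomial (Fin d) ℝ), p = ∑ j, q j ^ 2

/-- The quadratic module generated by a single polynomial `g`. -/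
def QM1 {d : ℕ} (g : MvPolynomial (Fin d) ℝ) : Set (MvPolynomial (Fin d) ℝ) :=
  {f | ∃ σ₀ σ₁ : MvPolynomial (Fin d) ℝ, IsSOS σ₀ ∧ IsSOS σ₁ ∧ f = σ₀ + σ₁ * g}

/-- `‖X‖² = X₁² + ⋯ + X_d²`. -/
noncomputable def normSq (d : ℕ) : MvPolynomial (Fin d) ℝ := ∑ i : Fin d, X i ^ 2

/-- `t(f,ρ) = Σ_α |c_α| (ρ+1)^{|α|}`. -/
noncomputable def tBound {d : ℕ} (f : MvPolynomial (Fin d) ℝ) (ρ : ℝ) : ℝ :=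
  ∑ α ∈ f.support, |f.coeff α| * (ρ + 1) ^ (α.sum fun _ k => k)

section aux
variable {d : ℕ}

lemma isSOS_zero : IsSOS (0 : MvPolynomial (Fin d) ℝ) := ⟨0, ![], by simp⟩

lemma isSOS_one : IsSOS (1 : MvPolynomial (Fin d) ℝ) := ⟨1, fun _ => 1, by simp⟩

lemma isSOS_sq (p : MvPolynomial (Fin d) ℝ) : IsSOS (p ^ 2) :=
  ⟨1, fun _ => p, by simp⟩

lemma IsSOS.add {p q : MvPolynomial (Fin d) ℝ} (hp : IsSOS p) (hq : IsSOS q) :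
    IsSOS (p + q) := by
  obtain ⟨k, u, rfl⟩ := hp
  obtain ⟨l, v, rfl⟩ := hq
  exact ⟨k + l, Fin.append u v, by rw [Fin.sum_univ_add]; simp⟩

lemma IsSOS.mul {p q : MvPolynomial (Fin d) ℝ} (hp : IsSOS p) (hq : IsSOS q) :
    IsSOS (p * q) := by
  obtain ⟨k, u, rfl⟩ := hp
  obtain ⟨l, v, rfl⟩ := hq
  refine ⟨k * l, fun j => u (finProdFinEquiv.symm j).1 * v (finProdFinEquiv.symm j).2, ?_⟩
  rw [Finset.sum_mul_sum, ← Equiv.sum_comp finProdFinEquiv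
    (fun j => (u (finProdFinEquiv.symm j).1 * v (finProdFinEquiv.symm j).2) ^ 2)]
  simp [Fintype.sum_prod_type, mul_pow]

lemma isSOS_C {c : ℝ} (hc : 0 ≤ c) : IsSOS (C c : MvPolynomial (Fin d) ℝ) :=
  ⟨1, fun _ => C (Real.sqrt c), by rw [Fin.sum_univ_one, ← map_pow, Real.sq_sqrt hc]⟩

lemma isSOS_finsetSum {ι : Type*} (s : Finset ι) (q : ι → MvPolynomial (Fin d) ℝ) :
    IsSOS (∑ i ∈ s, q i ^ 2) := by
  classical
  induction s using Finset.cons_induction with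
  | empty => simpa using (isSOS_zero (d := d))
  | cons i s his ih => rw [Finset.sum_cons]; exact (isSOS_sq _).add ih

variable {g : MvPolynomial (Fin d) ℝ}

lemma qm_of_sos {p : MvPolynomial (Fin d) ℝ} (hp : IsSOS p) : p ∈ QM1 g :=
  ⟨p, 0, hp, isSOS_zero, by ring⟩

lemma qm_add {p q : MvPolynomial (Fin d) ℝ} (hp : p ∈ QM1 g) (hq : q ∈ QM1 g) :
    p + q ∈ QM1 g := by
  obtain ⟨a, b, ha, hb, rfl⟩ := hp
  obtain ⟨a', b', ha', hb', rfl⟩ := hq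
  exact ⟨a + a', b + b', ha.add ha', hb.add hb', by ring⟩

lemma qm_mul {p q : MvPolynomial (Fin d) ℝ} (hp : p ∈ QM1 g) (hq : q ∈ QM1 g) :
    p * q ∈ QM1 g := by
  obtain ⟨a, b, ha, hb, rfl⟩ := hp
  obtain ⟨a', b', ha', hb', rfl⟩ := hq
  exact ⟨a * a' + (b * b') * g ^ 2, a * b' + b * a',
    (ha.mul ha').add ((hb.mul hb').mul (isSOS_sq g)),
    (ha.mul hb').add (hb.mul ha'), by ring⟩

lemma qm_half {p : MvPolynomial (Fin d) ℝ} (hp : C 2 * p ∈ QM1 g) : p ∈ QM1 g := by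
  have h : p = C (1/2 : ℝ) * (C 2 * p) := by
    rw [← mul_assoc, ← map_mul]; norm_num
  rw [h]
  exact qm_mul (qm_of_sos (isSOS_C (by norm_num))) hp

lemma qm_step (ρ : ℝ) (i : Fin d) :
    C (ρ + 1) + X i ∈ QM1 (C ρ - normSq d) ∧
    C (ρ + 1) - X i ∈ QM1 (C ρ - normSq d) := by
  have hnorm : normSq d = X i ^ 2 + ∑ j ∈ Finset.univ.erase i, X j ^ 2 := by
    rw [normSq, ← Finset.add_sum_erase _ _ (Finset.mem_univ i)]
  have hS : IsSOS (∑ j ∈ Finset.univ.erase i, (X j : MvPolynomial (Fin d) ℝ) ^ 2) :=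
    isSOS_finsetSum _ _
  constructor
  · apply qm_half
    refine ⟨(1 + X i) ^ 2 + 1 + X i ^ 2 + (∑ j ∈ Finset.univ.erase i, X j ^ 2 +
      ∑ j ∈ Finset.univ.erase i, X j ^ 2), C 2, ?_, isSOS_C (by norm_num), ?_⟩
    · exact (((isSOS_sq _).add isSOS_one).add (isSOS_sq _)).add (hS.add hS)
    · rw [hnorm]
      simp only [map_add, map_ofNat, C_1]
      ring
  · apply qm_half
    refine ⟨(1 - X i) ^ 2 + 1 + X i ^ 2 + (∑ j ∈ Finset.univ.erase i, X j ^ 2 +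
      ∑ j ∈ Finset.univ.erase i, X j ^ 2), C 2, ?_, isSOS_C (by norm_num), ?_⟩
    · exact (((isSOS_sq _).add isSOS_one).add (isSOS_sq _)).add (hS.add hS)
    · rw [hnorm]
      simp only [map_add, map_ofNat, C_1]
      ring

lemma qm_key (ρ : ℝ) : ∀ (n : ℕ) (α : Fin d →₀ ℕ), (α.sum fun _ k => k) = n →
    C ((ρ + 1) ^ n) + monomial α 1 ∈ QM1 (C ρ - normSq d) ∧
    C ((ρ + 1) ^ n) - monomial α 1 ∈ QM1 (C ρ - normSq d) := by
  intro n
  induction n with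
  | zero =>
    intro α hα
    have hα0 : α = 0 := by
      by_contra h
      obtain ⟨j, hj⟩ := Finsupp.support_nonempty_iff.mpr h
      have h1 : α j ≤ α.sum fun _ k => k :=
        Finset.single_le_sum (fun _ _ => Nat.zero_le _) hj
      have h2 := Finsupp.mem_support_iff.mp hj
      omega
    subst hα0
    rw [pow_zero, C_1]
    have hm : (monomial (0 : Fin d →₀ ℕ) (1:ℝ)) = 1 := by
      rw [monomial_zero', C_1]
    rw [hm]
    constructor
    · exact qm_of_sos (isSOS_one.add isSOS_one)
    · simpa using qm_of_sos (isSOS_zero (d := d))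
  | succ n ih =>
    intro α hα
    have hα0 : α ≠ 0 := by
      rintro rfl
      simp [Finsupp.sum] at hα
    obtain ⟨i, hi⟩ : ∃ i, α i ≠ 0 := by
      by_contra h
      push_neg at h
      exact hα0 (Finsupp.ext fun j => h j)
    set β := α - Finsupp.single i 1 with hβdef
    have hβ : Finsupp.single i 1 + β = α := by
      ext j
      simp only [Finsupp.add_apply, Finsupp.tsub_apply, Finsupp.single_apply, hβdef]
      by_cases hji : i = j
      · subst hji; simp; omega
      · simp [hji]
    have hβsum : (β.sum fun _ k => k) = n := by
      have h1 := congrArg (fun γ : Fin d →₀ ℕ => γ.sum fun _ k => k) hβ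
      try simp only at h1
      rw [Finsupp.sum_add_index' (fun _ => rfl) (fun _ _ _ => rfl),
        Finsupp.sum_single_index rfl, hα] at h1
      omega
    have hmono : monomial α (1:ℝ) = X i * monomial β 1 := by
      rw [← hβ, X, monomial_mul, one_mul]
    obtain ⟨hA₁, hA₂⟩ := ih β hβsum
    obtain ⟨hB₁, hB₂⟩ := qm_step (d := d) ρ i
    constructor
    · apply qm_half
      have heq : C (2:ℝ) * (C ((ρ + 1) ^ (n+1)) + monomial α 1) =
          (C (ρ + 1) + X i) * (C ((ρ + 1) ^ n) + monomial β 1) +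
          (C (ρ + 1) - X i) * (C ((ρ + 1) ^ n) - monomial β 1) := by
        rw [hmono, pow_succ, map_mul]
        simp only [map_ofNat]
        ring
      rw [heq]
      exact qm_add (qm_mul hB₁ hA₁) (qm_mul hB₂ hA₂)
    · apply qm_half
      have heq : C (2:ℝ) * (C ((ρ + 1) ^ (n+1)) - monomial α 1) =
          (C (ρ + 1) + X i) * (C ((ρ + 1) ^ n) - monomial β 1) +
          (C (ρ + 1) - X i) * (C ((ρ + 1) ^ n) + monomial β 1) := by
        rw [hmono, pow_succ, map_mul]
        simp only [map_ofNat]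
        ring
      rw [heq]
      exact qm_add (qm_mul hB₁ hA₂) (qm_mul hB₂ hA₁)

lemma qm_term (ρ : ℝ) (α : Fin d →₀ ℕ) (c : ℝ) :
    C (|c| * (ρ + 1) ^ (α.sum fun _ k => k)) + monomial α c ∈ QM1 (C ρ - normSq d) ∧
    C (|c| * (ρ + 1) ^ (α.sum fun _ k => k)) - monomial α c ∈ QM1 (C ρ - normSq d) := by
  obtain ⟨h₁, h₂⟩ := qm_key (d := d) ρ (α.sum fun _ k => k) α rfl
  have hmc : (monomial α c : MvPolynomial (Fin d) ℝ) = C c * monomial α 1 := by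
    rw [C_mul_monomial, mul_one]
  have habs := qm_of_sos (g := C ρ - normSq d) (isSOS_C (abs_nonneg c) (d := d))
  rcases le_or_gt 0 c with hc | hc
  · constructor
    · have : C (|c| * (ρ + 1) ^ (α.sum fun _ k => k)) + monomial α c =
          C |c| * (C ((ρ + 1) ^ (α.sum fun _ k => k)) + monomial α 1) := by
        rw [hmc, map_mul, mul_add, abs_of_nonneg hc]
      rw [this]; exact qm_mul habs h₁
    · have : C (|c| * (ρ + 1) ^ (α.sum fun _ k => k)) - monomial α c =
          C |c| * (C ((ρ + 1) ^ (α.sum fun _ k => k)) - monomial α 1) := by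
        rw [hmc, map_mul, mul_sub, abs_of_nonneg hc]
      rw [this]; exact qm_mul habs h₂
  · constructor
    · have : C (|c| * (ρ + 1) ^ (α.sum fun _ k => k)) + monomial α c =
          C |c| * (C ((ρ + 1) ^ (α.sum fun _ k => k)) - monomial α 1) := by
        rw [hmc, map_mul, mul_sub, abs_of_neg hc, map_neg]
        ring
      rw [this]; exact qm_mul habs h₂
    · have : C (|c| * (ρ + 1) ^ (α.sum fun _ k => k)) - monomial α c =
          C |c| * (C ((ρ + 1) ^ (α.sum fun _ k => k)) + monomial α 1) := by
        rw [hmc, map_mul, mul_add, abs_of_neg hc, map_neg]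
        ring
      rw [this]; exact qm_mul habs h₁

end aux

theorem tBound_pm_f_mem_QM1 (d : ℕ) (f : MvPolynomial (Fin d) ℝ) (ρ : ℝ) (hρ : 0 < ρ) :
    C (tBound f ρ) + f ∈ QM1 (C ρ - normSq d) ∧
    C (tBound f ρ) - f ∈ QM1 (C ρ - normSq d) := by
  have hCt : (C (tBound f ρ) : MvPolynomial (Fin d) ℝ) =
      ∑ α ∈ f.support, C (|f.coeff α| * (ρ + 1) ^ (α.sum fun _ k => k)) := by
    rw [tBound, map_sum]
  have hf : f = ∑ α ∈ f.support, monomial α (f.coeff α) :=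
    (support_sum_monomial_coeff f).symm
  constructor
  · have h : ∑ α ∈ f.support, (C (|f.coeff α| * (ρ + 1) ^ (α.sum fun _ k => k)) +
          monomial α (f.coeff α)) = C (tBound f ρ) + f := by
      rw [Finset.sum_add_distrib, ← hCt, support_sum_monomial_coeff]
    rw [← h]
    refine Finset.sum_induction _ (· ∈ QM1 (C ρ - normSq d)) (fun _ _ => qm_add)
      (qm_of_sos isSOS_zero) ?_
    intro α _
    exact (qm_term ρ α (f.coeff α)).1
  · have h : ∑ α ∈ f.support, (C (|f.coeff α| * (ρ + 1) ^ (α.sum fun _ k => k)) -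
          monomial α (f.coeff α)) = C (tBound f ρ) - f := by
      rw [Finset.sum_sub_distrib, ← hCt, support_sum_monomial_coeff]
    rw [← h]
    refine Finset.sum_induction _ (· ∈ QM1 (C ρ - normSq d)) (fun _ _ => qm_add)
      (qm_of_sos isSOS_zero) ?_
    intro α _
    exact (qm_term ρ α (f.coeff α)).2
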